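/- arXiv:1611.03267 — 4 statements merged into one kernel-verified Lean document; each statement's English description precedes it below -/
import Mathlib

section
/- Let T be a reflexive and transitive binary relation on a set A, and let U ⊆ A. Assume that for every a ∉ U and every b ∈ A, if T a b and T b a then a = b. Define T' a b := T a b ∧ (a ≠ b ∨ a ∈ U). Then T' is transitive. -/
theorem stmt_7 (A : Type*) (T : A → A → Prop) (U : Set A)
    (hrefl : ∀ a, T a a)
    (htrans : ∀ a b c, T a b → T b c → T a c)
    (hU : ∀ a ∉ U, ∀ b, T a b → T b a → a = b) :
    ∀ a b c : A,
      (T a b ∧ (a ≠ b ∨ a ∈ U)) → (T b c ∧ (b ≠ c ∨ b ∈ U)) →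
      (T a c ∧ (a ≠ c ∨ a ∈ U)) := by
  intro a b c ⟨hab, h1⟩ ⟨hbc, h2⟩
  refine ⟨htrans a b c hab hbc, ?_⟩
  by_cases hUa : a ∈ U
  · exact Or.inr hUa
  · left
    intro hac; subst hac
    have := hU a hUa b hab hbc
    subst this
    rcases h1 with h | h
    · exact h rfl
    · exact hUa h
end

section
/- Let A be a finite type, let E1 and E2 be equivalence relations on A, and let P, Q, S ⊆ A. Assume: (1) there exists a ∈ P ∩ S; (2) for every a ∈ S and b ∈ A, if E2 a b then a = b; (3) for every a ∈ P there exists b ∈ Q with E1 a b and a ≠ b; (4) for every a ∈ Q there exists b ∈ P with E2 a b and a ≠ b; (5) for all a, b ∈ P, if E1 a b then a = b; (6) for all a, b ∈ Q, if E2 a b then a = b. Then a contradiction follows (no such finite structure exists). -/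
theorem stmt_8 (A : Type*) [Finite A] (E1 E2 : A → A → Prop)
    (hE1 : Equivalence E1) (hE2 : Equivalence E2)
    (P Q S : Set A)
    (h1 : ∃ a, a ∈ P ∧ a ∈ S)
    (h2 : ∀ a ∈ S, ∀ b, E2 a b → a = b)
    (h3 : ∀ a ∈ P, ∃ b ∈ Q, E1 a b ∧ a ≠ b)
    (h4 : ∀ a ∈ Q, ∃ b ∈ P, E2 a b ∧ a ≠ b)
    (h5 : ∀ a ∈ P, ∀ b ∈ P, E1 a b → a = b)
    (h6 : ∀ a ∈ Q, ∀ b ∈ Q, E2 a b → a = b) :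
    False := by
  obtain ⟨a0, ha0P, ha0S⟩ := h1
  choose f hfQ hfE hfne using h3
  choose g hgP hgE hgne using h4
  set F : {a // a ∈ P} → {a // a ∈ P} :=
    fun x => ⟨g (f x.1 x.2) (hfQ x.1 x.2), hgP _ _⟩ with hF
  set s : ℕ → {a // a ∈ P} := fun n => F^[n] ⟨a0, ha0P⟩ with hs
  have hsucc : ∀ n, s (n + 1) = F (s n) := by
    intro n; simp [hs, Function.iterate_succ_apply']
  -- b n : the Q-element associated to s n
  have hb : ∀ n, E2 (f (s n).1 (s n).2) (s (n+1)).1 ∧ f (s n).1 (s n).2 ≠ (s (n+1)).1 := by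
    intro n
    rw [hsucc n]
    exact ⟨hgE _ _, hgne _ _⟩
  have hbase : ∀ j, (s (j+1)).1 ≠ a0 := by
    intro j hj
    have hE2j : E2 a0 (f (s j).1 (s j).2) := hE2.symm (hj ▸ (hb j).1)
    have := h2 a0 ha0S _ hE2j
    exact (hb j).2 (by rw [← this, hj])
  have hstep : ∀ i j, (s (i+1)).1 = (s (j+1)).1 → (s i).1 = (s j).1 := by
    intro i j h
    have e2 : E2 (f (s i).1 (s i).2) (f (s j).1 (s j).2) :=
      hE2.trans (hb i).1 (h ▸ hE2.symm (hb j).1)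
    have hbij : f (s i).1 (s i).2 = f (s j).1 (s j).2 :=
      h6 _ (hfQ _ _) _ (hfQ _ _) e2
    have e1 : E1 (s i).1 (s j).1 :=
      hE1.trans (hfE (s i).1 (s i).2) (hbij ▸ hE1.symm (hfE (s j).1 (s j).2))
    exact h5 _ (s i).2 _ (s j).2 e1
  have hinj : Function.Injective (fun n => (s n).1) := by
    intro i j h
    simp only at h
    induction i generalizing j with
    | zero =>
      cases j with
      | zero => rfl
      | succ j => exact absurd h.symm (hbase j)
    | succ i ih =>
      cases j with
      | zero => exact absurd h (hbase i)
      | succ j => exact congrArg Nat.succ (ih (hstep i j h))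
  have : Function.Injective (fun n : ℕ => (s n).1) := hinj
  obtain ⟨x, y, hxy, hmap⟩ := Finite.exists_ne_map_eq_of_infinite (fun n : ℕ => (s n).1)
  exact hxy (hinj hmap)
end

section
/- Let A be a finite type, T a reflexive and transitive binary relation on A, R a binary relation on A, and P, U ⊆ A. Assume: (1) there exists a ∈ P ∩ U; (2) for every a ∈ P there exists b ∈ P with T a b and (a ∈ U ↔ b ∉ U); (3) for all a, b, if T a b then R a b or (a ∈ U ↔ b ∈ U); (4) for all a, b, if R a b then ¬ R b a. Then a contradiction follows (no such finite structure exists). -/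
theorem stmt_9 (A : Type*) [Finite A] (T R : A → A → Prop)
    (P U : Set A)
    (hrefl : ∀ a, T a a)
    (htrans : ∀ a b c, T a b → T b c → T a c)
    (h1 : ∃ a, a ∈ P ∧ a ∈ U)
    (h2 : ∀ a ∈ P, ∃ b ∈ P, T a b ∧ (a ∈ U ↔ b ∉ U))
    (h3 : ∀ a b, T a b → R a b ∨ (a ∈ U ↔ b ∈ U))
    (h4 : ∀ a b, R a b → ¬ R b a) :
    False := by
  obtain ⟨a0, ha0P, ha0U⟩ := h1
  -- successor function on P
  choose g hgP hgT hgU using h2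
  -- build the sequence
  let f : ℕ → {x : A // x ∈ P} := fun n =>
    Nat.rec ⟨a0, ha0P⟩ (fun _ p => ⟨g p.1 p.2, hgP p.1 p.2⟩) n
  have hfT : ∀ n, T (f n).1 (f (n+1)).1 := fun n => hgT (f n).1 (f n).2
  have hfU : ∀ n, ((f n).1 ∈ U ↔ (f (n+1)).1 ∉ U) := fun n => hgU (f n).1 (f n).2
  have hchain : ∀ m n, m ≤ n → T (f m).1 (f n).1 := by
    intro m n hmn
    induction n with
    | zero => exact Nat.le_zero.mp hmn ▸ hrefl _
    | succ k ih =>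
      rcases Nat.lt_or_ge m (k+1) with h | h
      · exact htrans _ _ _ (ih (Nat.lt_succ_iff.mp h)) (hfT k)
      · have : m = k + 1 := le_antisymm hmn h
        subst this; exact hrefl _
  have hninj : ¬ Function.Injective (fun n => (f n).1) := by
    intro hinj
    exact (Finite.of_injective _ hinj).not_infinite (by infer_instance)
  rw [Function.not_injective_iff] at hninj
  obtain ⟨i, j, hfe, hne⟩ := hninj
  wlog hij : i < j generalizing i j
  · exact this j i hfe.symm hne.symm (by omega)
  -- T (f (i+1)) (f j) = T (f (i+1)) (f i)
  have hT1 : T (f i).1 (f (i+1)).1 := hfT i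
  have hT2 : T (f (i+1)).1 (f i).1 := by
    have := hchain (i+1) j hij
    rwa [show (f j).1 = (f i).1 from hfe.symm] at this
  have hU : ¬ ((f i).1 ∈ U ↔ (f (i+1)).1 ∈ U) := by
    have := hfU i; tauto
  have hR1 : R (f i).1 (f (i+1)).1 := (h3 _ _ hT1).resolve_right hU
  have hR2 : R (f (i+1)).1 (f i).1 := by
    refine (h3 _ _ hT2).resolve_right ?_
    tauto
  exact h4 _ _ hR1 hR2
end

section
/- Let Γ be a system of m linear inequalities in n unknowns with all coefficients and constants in {-a, ..., a}. If Γ admits a nonnegative integer solution, then it admits a nonnegative integer solution in which every value assigned to an unknown is at most n·(m·a)^{2m+1}. -/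
set_option maxHeartbeats 1000000


lemma detAbs {s : ℕ} (A : Matrix (Fin s) (Fin s) ℤ) {a : ℤ}
    (hA : ∀ i j, |A i j| ≤ a) (ha : 0 ≤ a) :
    |A.det| ≤ (s.factorial : ℤ) * a ^ s := by
  rw [Matrix.det_apply]
  calc |∑ σ : Equiv.Perm (Fin s), Equiv.Perm.sign σ • ∏ i, A (σ i) i|
      ≤ ∑ σ : Equiv.Perm (Fin s), |Equiv.Perm.sign σ • ∏ i, A (σ i) i| :=
        Finset.abs_sum_le_sum_abs _ _
    _ ≤ ∑ _σ : Equiv.Perm (Fin s), a ^ s := by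
        refine Finset.sum_le_sum fun σ _ => ?_
        have h1 : |Equiv.Perm.sign σ • ∏ i, A (σ i) i| = |∏ i, A (σ i) i| := by
          rcases Int.units_eq_one_or (Equiv.Perm.sign σ) with h | h <;> rw [h] <;> simp
        rw [h1, Finset.abs_prod]
        calc ∏ i, |A (σ i) i| ≤ ∏ _i : Fin s, a :=
              Finset.prod_le_prod (fun i _ => abs_nonneg _) (fun i _ => hA _ _)
          _ = a ^ s := by simp
    _ = (s.factorial : ℤ) * a ^ s := by
        rw [Finset.sum_const, Finset.card_univ, Fintype.card_perm, Fintype.card_fin,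
          nsmul_eq_mul]

lemma adjAbs' {t : ℕ} (A : Matrix (Fin (t+1)) (Fin (t+1)) ℤ) {a : ℤ}
    (hA : ∀ i j, |A i j| ≤ a) (ha : 0 ≤ a) (i j : Fin (t+1)) :
    |A.adjugate i j| ≤ (t.factorial : ℤ) * a ^ t := by
  rw [Matrix.adjugate_apply]
  set B := A.updateRow j (Pi.single i 1) with hB
  set ρ : Equiv.Perm (Fin (t+1)) := Equiv.swap 0 j with hρ
  have hperm : Matrix.det (fun k l => B (ρ k) l) = (Equiv.Perm.sign ρ : ℤ) * B.det :=
    Matrix.det_permute ρ B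
  have habs : |B.det| = |Matrix.det (fun k l => B (ρ k) l)| := by
    rw [hperm, abs_mul]
    rcases Int.units_eq_one_or (Equiv.Perm.sign ρ) with h | h <;> rw [h] <;> simp
  set C : Matrix (Fin (t+1)) (Fin (t+1)) ℤ := fun k l => B (ρ k) l with hC
  have hC0 : ∀ l, C 0 l = Pi.single (M := fun _ => ℤ) i 1 l := by
    intro l
    have : ρ 0 = j := Equiv.swap_apply_left 0 j
    rw [hC]; simp only [this]
    rw [hB, Matrix.updateRow_self]
  have hrow : ∀ (k : Fin t) (l : Fin (t+1)), C k.succ l = A (ρ k.succ) l := by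
    intro k l
    have hne : ρ k.succ ≠ j := by
      intro h
      have h0 : ρ 0 = j := Equiv.swap_apply_left 0 j
      have := ρ.injective (h.trans h0.symm)
      exact (Fin.succ_ne_zero k) this
    show A.updateRow j (Pi.single i 1) (ρ k.succ) l = A (ρ k.succ) l
    rw [Matrix.updateRow_ne hne]
  have hexp : C.det = ∑ l : Fin (t+1), (-1) ^ (l : ℕ) * C 0 l * (C.submatrix Fin.succ l.succAbove).det :=
    Matrix.det_succ_row_zero C
  have hsingle : C.det = (-1) ^ (i : ℕ) * (C.submatrix Fin.succ i.succAbove).det := by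
    rw [hexp]
    rw [Finset.sum_eq_single i]
    · rw [hC0, Pi.single_eq_same]; ring
    · intro l _ hl
      rw [hC0, Pi.single_eq_of_ne (M := fun _ => ℤ) hl 1]; ring
    · intro h; exact absurd (Finset.mem_univ i) h
  have hminor : |(C.submatrix Fin.succ i.succAbove).det| ≤ (t.factorial : ℤ) * a ^ t := by
    apply detAbs _ _ ha
    intro k l
    rw [Matrix.submatrix_apply, hrow]
    exact hA _ _
  calc |B.det| = |C.det| := habs
    _ = |(C.submatrix Fin.succ i.succAbove).det| := by
        rw [hsingle, abs_mul, abs_pow, abs_neg, abs_one, one_pow, one_mul]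
    _ ≤ (t.factorial : ℤ) * a ^ t := hminor


lemma adjAbs {s : ℕ} (A : Matrix (Fin s) (Fin s) ℤ) {a : ℤ}
    (hA : ∀ i j, |A i j| ≤ a) (ha : 0 ≤ a) (i j : Fin s) :
    |A.adjugate i j| ≤ ((s-1).factorial : ℤ) * a ^ (s-1) := by
  cases s with
  | zero => exact i.elim0
  | succ t => simpa using adjAbs' A hA ha i j

lemma dichotomy {ι : Type} [Fintype ι] [DecidableEq ι] {a : ℤ} (ha : 1 ≤ a) :
    ∀ (s : ℕ) (M : Matrix ι (Fin s) ℤ), (∀ i j, |M i j| ≤ a) →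
    (∃ d : Fin s → ℤ, d ≠ 0 ∧ (∀ i, ∑ j, M i j * d j = 0) ∧
        ∀ j, |d j| ≤ (((s-1).factorial : ℕ) : ℤ) * a ^ (s-1)) ∨
    (∃ r : Fin s ↪ ι, (M.submatrix r id).det ≠ 0) := by
  have ha0 : (0:ℤ) ≤ a := le_trans zero_le_one ha
  intro s
  induction s with
  | zero =>
      intro M _
      right
      refine ⟨⟨Fin.elim0, fun x => x.elim0⟩, ?_⟩
      rw [Matrix.det_fin_zero]
      exact one_ne_zero
  | succ s IH =>
      intro M hM
      set M' : Matrix ι (Fin s) ℤ := M.submatrix id Fin.castSucc with hM'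
      rcases IH M' (fun i j => hM i _) with ⟨d', hd0, hker, hbd⟩ | ⟨r, hdet⟩
      · -- extend kernel vector by zero
        left
        refine ⟨Fin.snoc d' 0, ?_, ?_, ?_⟩
        · intro h
          apply hd0
          funext k
          have := congrFun h k.castSucc
          simpa [Fin.snoc_castSucc] using this
        · intro i
          rw [Fin.sum_univ_castSucc]
          simp only [Fin.snoc_castSucc, Fin.snoc_last, mul_zero, add_zero]
          exact hker i
        · intro j
          have hmono : (((s-1).factorial : ℕ) : ℤ) * a ^ (s-1)
              ≤ ((s.factorial : ℕ) : ℤ) * a ^ s := by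
            have h1 : (s-1).factorial ≤ s.factorial :=
              Nat.factorial_le (Nat.sub_le s 1)
            have h2 : a ^ (s-1) ≤ a ^ s := pow_le_pow_right₀ ha (Nat.sub_le s 1)
            have h3 : (0:ℤ) ≤ a ^ (s-1) := pow_nonneg ha0 _
            calc (((s-1).factorial : ℕ) : ℤ) * a ^ (s-1)
                ≤ ((s.factorial : ℕ) : ℤ) * a ^ (s-1) := by
                  apply mul_le_mul_of_nonneg_right _ h3
                  exact_mod_cast h1
              _ ≤ ((s.factorial : ℕ) : ℤ) * a ^ s := by
                  apply mul_le_mul_of_nonneg_left h2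
                  positivity
          refine j.lastCases ?_ ?_
          · simpa [Fin.snoc_last] using
              le_trans (by positivity) hmono
          · intro k
            simp only [Fin.snoc_castSucc, Nat.succ_sub_one]
            exact le_trans (hbd k) hmono
      · -- invertible s×s submatrix R of first s columns
        set R : Matrix (Fin s) (Fin s) ℤ := M'.submatrix r id with hR
        have hRa : ∀ i j, |R i j| ≤ a := fun i j => hM _ _
        set u : ι → ℤ := fun i => M i (Fin.last s) with hu
        set x : Fin s → ℤ := R.adjugate.mulVec (fun k => u (r k)) with hx
        set δ : ι → ℤ := fun i => (∑ k, M' i k * x k) - R.det * u i with hδ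
        have key : ∀ k₀ : Fin s, δ (r k₀) = 0 := by
          intro k₀
          have h1 : (∑ k, M' (r k₀) k * x k) = (R.mulVec x) k₀ := by
            simp [Matrix.mulVec, dotProduct, hR]
          have h2 : R.mulVec x = R.det • (fun k => u (r k)) := by
            rw [hx, Matrix.mulVec_mulVec, Matrix.mul_adjugate,
              Matrix.smul_mulVec, Matrix.one_mulVec]
          show (∑ k, M' (r k₀) k * x k) - R.det * u (r k₀) = 0
          rw [h1, h2]
          simp only [Pi.smul_apply, smul_eq_mul]
          ring
        by_cases hall : ∀ i, δ i = 0
        · left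
          refine ⟨Fin.snoc x (-R.det), ?_, ?_, ?_⟩
          · intro h
            have := congrFun h (Fin.last s)
            rw [Fin.snoc_last] at this
            exact hdet (neg_eq_zero.mp this)
          · intro i
            rw [Fin.sum_univ_castSucc]
            simp only [Fin.snoc_castSucc, Fin.snoc_last]
            have h2' : (∑ k, M' i k * x k) - R.det * u i = 0 := hall i
            have h2 : (∑ k, M' i k * x k) = R.det * u i := by linarith
            have h3 : (∑ k, M i k.castSucc * x k) = (∑ k, M' i k * x k) := by
              apply Finset.sum_congr rfl
              intro k _
              rw [hM']
              rfl
            rw [h3, h2, hu]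
            ring
          · intro j
            have hdetR : |R.det| ≤ ((s.factorial : ℕ) : ℤ) * a ^ s :=
              detAbs R hRa ha0
            refine j.lastCases ?_ ?_
            · rw [Fin.snoc_last]
              rw [abs_neg]
              simpa using hdetR
            · intro k
              rw [Fin.snoc_castSucc]
              -- |x k| ≤ s * ((s-1)! a^{s-1}) * a ≤ s! a^s
              have hxk : |x k| ≤ (s : ℤ) * ((((s-1).factorial : ℕ) : ℤ) * a ^ (s-1)) * a := by
                rw [hx]
                have : R.adjugate.mulVec (fun k => u (r k)) k
                    = ∑ l, R.adjugate k l * u (r l) := by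
                  simp [Matrix.mulVec, dotProduct]
                rw [this]
                calc |∑ l, R.adjugate k l * u (r l)|
                    ≤ ∑ l, |R.adjugate k l * u (r l)| := Finset.abs_sum_le_sum_abs _ _
                  _ ≤ ∑ _l : Fin s, (((s-1).factorial : ℕ) : ℤ) * a ^ (s-1) * a := by
                      refine Finset.sum_le_sum fun l _ => ?_
                      rw [abs_mul]
                      apply mul_le_mul (adjAbs R hRa ha0 k l) (hM _ _) (abs_nonneg _)
                      positivity
                  _ = (s : ℤ) * ((((s-1).factorial : ℕ) : ℤ) * a ^ (s-1)) * a := by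
                      rw [Finset.sum_const, Finset.card_univ, Fintype.card_fin,
                        nsmul_eq_mul]
                      ring
              have hfin : (s : ℤ) * ((((s-1).factorial : ℕ) : ℤ) * a ^ (s-1)) * a
                  ≤ ((s.factorial : ℕ) : ℤ) * a ^ s := by
                cases s with
                | zero => exact k.elim0
                | succ t =>
                    simp only [Nat.succ_sub_one, Nat.factorial_succ, pow_succ]
                    push_cast
                    ring_nf
                    nlinarith [pow_nonneg ha0 t, (Nat.cast_pos (α := ℤ)).mpr t.factorial_pos,
                      pow_le_pow_right₀ ha (Nat.le_refl t)]
              simpa using le_trans hxk hfin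
        · -- extend rows: found (s+1)×(s+1) invertible submatrix
          right
          push_neg at hall
          obtain ⟨i₀, hi₀⟩ := hall
          have hi₀r : ∀ k, r k ≠ i₀ := fun k h => hi₀ (h ▸ key k)
          set f : Fin (s+1) → ι := Fin.snoc (fun k => r k) i₀ with hf
          have finj : Function.Injective f := by
            intro p q hpq
            rcases Fin.eq_castSucc_or_eq_last p with ⟨kp, rfl⟩ | rfl <;>
              rcases Fin.eq_castSucc_or_eq_last q with ⟨kq, rfl⟩ | rfl
            · simp only [hf, Fin.snoc_castSucc] at hpq
              exact congrArg Fin.castSucc (r.injective hpq)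
            · simp only [hf, Fin.snoc_castSucc, Fin.snoc_last] at hpq
              exact absurd hpq (hi₀r kp)
            · simp only [hf, Fin.snoc_castSucc, Fin.snoc_last] at hpq
              exact absurd hpq.symm (hi₀r kq)
            · rfl
          set T : Matrix (Fin (s+1)) (Fin (s+1)) ℤ := M.submatrix f id with hT
          set dh : Fin (s+1) → ℤ := Fin.snoc x (-R.det) with hdh
          have hTrow : ∀ (k : Fin s) (j : Fin (s+1)), T k.castSucc j = M (r k) j := by
            intro k j
            show M (f k.castSucc) j = M (r k) j
            rw [hf, Fin.snoc_castSucc]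
          have hTlast : ∀ j : Fin (s+1), T (Fin.last s) j = M i₀ j := by
            intro j
            show M (f (Fin.last s)) j = M i₀ j
            rw [hf, Fin.snoc_last]
          have hmv : ∀ q, (T.mulVec dh) q = if q = Fin.last s then δ i₀ else 0 := by
            intro q
            have hexp : (T.mulVec dh) q
                = (∑ k : Fin s, T q k.castSucc * x k) - T q (Fin.last s) * R.det := by
              show (∑ j, T q j * dh j) = _
              rw [Fin.sum_univ_castSucc]
              have h1 : ∀ k : Fin s, dh k.castSucc = x k := fun k => by
                rw [hdh, Fin.snoc_castSucc]
              have h2 : dh (Fin.last s) = -R.det := by rw [hdh, Fin.snoc_last]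
              simp only [h1, h2]
              ring
            rcases Fin.eq_castSucc_or_eq_last q with ⟨k, rfl⟩ | rfl
            · rw [if_neg (Fin.castSucc_lt_last k).ne, hexp]
              have h2 : (∑ kk, M' (r k) kk * x kk) - R.det * u (r k) = 0 := key k
              have h3 : (∑ kk : Fin s, T k.castSucc kk.castSucc * x kk)
                  = ∑ kk, M' (r k) kk * x kk := by
                refine Finset.sum_congr rfl fun kk _ => ?_
                rw [hTrow]
                rfl
              rw [h3, hTrow]
              show (∑ kk, M' (r k) kk * x kk) - u (r k) * R.det = 0
              linarith
            · rw [if_pos rfl, hexp]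
              have h3 : (∑ kk : Fin s, T (Fin.last s) kk.castSucc * x kk)
                  = ∑ kk, M' i₀ kk * x kk := by
                refine Finset.sum_congr rfl fun kk _ => ?_
                rw [hTlast]
                rfl
              rw [h3, hTlast]
              show (∑ kk, M' i₀ kk * x kk) - u i₀ * R.det = δ i₀
              show (∑ kk, M' i₀ kk * x kk) - u i₀ * R.det
                = (∑ kk, M' i₀ kk * x kk) - R.det * u i₀
              ring
          have hadjTll : T.adjugate (Fin.last s) (Fin.last s) = R.det := by
            rw [Matrix.adjugate_apply]
            set X := T.updateRow (Fin.last s) (Pi.single (Fin.last s) 1) with hX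
            rw [Matrix.det_succ_row X (Fin.last s)]
            have hXlast : ∀ j, X (Fin.last s) j = Pi.single (M := fun _ => ℤ) (Fin.last s) 1 j := by
              intro j; rw [hX, Matrix.updateRow_self]
            rw [Finset.sum_eq_single (Fin.last s)]
            · have hsign : ((-1 : ℤ)) ^ ((Fin.last s : ℕ) + (Fin.last s : ℕ)) = 1 := by
                rw [← two_mul, pow_mul]
                norm_num
              have hXsub : X.submatrix (Fin.last s).succAbove (Fin.last s).succAbove = R := by
                funext p q
                rw [Matrix.submatrix_apply, Fin.succAbove_last, hX,
                  Matrix.updateRow_ne (Fin.castSucc_lt_last p).ne, hTrow]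
                rfl
              rw [hXlast, Pi.single_eq_same, hsign, hXsub]
              ring
            · intro l _ hl
              rw [hXlast, Pi.single_eq_of_ne (M := fun _ => ℤ) hl 1]
              ring
            · intro h; exact absurd (Finset.mem_univ _) h
          refine ⟨⟨f, finj⟩, ?_⟩
          intro hdT
          have hTdet0 : T.det = 0 := hdT
          have hid : T.adjugate.mulVec (T.mulVec dh) = T.det • dh := by
            rw [Matrix.mulVec_mulVec, Matrix.adjugate_mul, Matrix.smul_mulVec,
              Matrix.one_mulVec]
          have hlhs : T.adjugate.mulVec (T.mulVec dh) (Fin.last s)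
              = R.det * δ i₀ := by
            show (∑ q, T.adjugate (Fin.last s) q * (T.mulVec dh) q) = _
            rw [Finset.sum_eq_single (Fin.last s)]
            · rw [hmv, if_pos rfl, hadjTll]
            · intro q _ hq
              rw [hmv, if_neg hq, mul_zero]
            · intro h; exact absurd (Finset.mem_univ _) h
          have hrhs : (T.det • dh) (Fin.last s) = 0 := by
            rw [hTdet0]
            simp
          rw [hid] at hlhs
          rw [hlhs] at hrhs
          exact (mul_ne_zero hdet hi₀) hrhs


lemma exchange {m n : ℕ} (c : Fin m → Fin n → ℤ) (b : Fin m → ℤ) (z : Fin n → ℕ)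
    (d : Fin n → ℤ) (hd0 : d ≠ 0) (hdz : ∀ j, |d j| ≤ (z j : ℤ))
    (hslack : ∀ i, |∑ j, c i j * d j| ≤ (∑ j, c i j * (z j : ℤ)) - b i) :
    ∃ x : Fin n → ℕ, (∀ i, b i ≤ ∑ j, c i j * (x j : ℤ)) ∧
      (toLex ((∑ j, x j), toLex x) < toLex ((∑ j, z j), toLex z)) := by
  classical
  have hJne : (Finset.univ.filter (fun j => d j ≠ 0)).Nonempty := by
    rcases Function.ne_iff.mp hd0 with ⟨j, hj⟩
    exact ⟨j, by simpa using hj⟩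
  set j₀ := (Finset.univ.filter (fun j => d j ≠ 0)).min' hJne with hj₀
  have hdj₀ : d j₀ ≠ 0 := by
    have := (Finset.univ.filter (fun j => d j ≠ 0)).min'_mem hJne
    simpa using this
  have hbelow : ∀ j, j < j₀ → d j = 0 := by
    intro j hj
    by_contra hne
    have hmem : j ∈ Finset.univ.filter (fun j => d j ≠ 0) := by simpa using hne
    exact absurd (Finset.min'_le _ _ hmem) (not_le.mpr hj)
  set S := ∑ j, d j with hS
  set σ : ℤ := if 0 < S then 1 else if S < 0 then -1 else (if 0 < d j₀ then 1 else -1)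
    with hσ
  have hσcases : σ = 1 ∨ σ = -1 := by
    rw [hσ]; split_ifs <;> simp
  have hσabs : ∀ t : ℤ, |σ * t| = |t| := by
    intro t
    rcases hσcases with h | h <;> rw [h] <;> simp
  have hnonneg : ∀ j, 0 ≤ (z j : ℤ) - σ * d j := by
    intro j
    have h1 : σ * d j ≤ |σ * d j| := le_abs_self _
    rw [hσabs] at h1
    have := hdz j
    linarith
  set x : Fin n → ℕ := fun j => ((z j : ℤ) - σ * d j).toNat with hx
  have hxz : ∀ j, (x j : ℤ) = (z j : ℤ) - σ * d j := by
    intro j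
    rw [hx]
    exact Int.toNat_of_nonneg (hnonneg j)
  have hsum : ∀ i, ∑ j, c i j * (x j : ℤ)
      = (∑ j, c i j * (z j : ℤ)) - σ * ∑ j, c i j * d j := by
    intro i
    rw [Finset.mul_sum, ← Finset.sum_sub_distrib]
    refine Finset.sum_congr rfl fun j _ => ?_
    rw [hxz]
    ring
  refine ⟨x, ?_, ?_⟩
  · intro i
    rw [hsum]
    have h1 : σ * ∑ j, c i j * d j ≤ |σ * ∑ j, c i j * d j| := le_abs_self _
    rw [hσabs] at h1
    have := hslack i
    linarith
  · have hsx : ((∑ j, x j : ℕ) : ℤ) = ((∑ j, z j : ℕ) : ℤ) - σ * S := by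
      push_cast
      rw [hS, Finset.mul_sum, ← Finset.sum_sub_distrib]
      exact Finset.sum_congr rfl fun j _ => by rw [hxz]
    rw [Prod.Lex.lt_iff]
    by_cases hS0 : S = 0
    · right
      constructor
      · have : ((∑ j, x j : ℕ) : ℤ) = ((∑ j, z j : ℕ) : ℤ) := by
          rw [hsx, hS0, mul_zero, sub_zero]
        exact_mod_cast this
      · -- lex on functions
        have hσd : 0 < σ * d j₀ := by
          have h1 : ¬ (0 < S) := by rw [hS0]; exact lt_irrefl 0
          have h2 : ¬ (S < 0) := by rw [hS0]; exact lt_irrefl 0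
          rw [hσ, if_neg h1, if_neg h2]
          rcases lt_trichotomy (d j₀) 0 with h | h | h
          · rw [if_neg (by linarith)]; linarith
          · exact absurd h hdj₀
          · rw [if_pos h]; linarith
        have hlt : x j₀ < z j₀ := by
          have : (x j₀ : ℤ) < (z j₀ : ℤ) := by
            rw [hxz]; linarith
          exact_mod_cast this
        have heq : ∀ j, j < j₀ → x j = z j := by
          intro j hj
          have : (x j : ℤ) = (z j : ℤ) := by
            rw [hxz, hbelow j hj]; ring
          exact_mod_cast this
        exact ⟨j₀, heq, hlt⟩
    · left
      have hpos : 0 < σ * S := by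
        rcases lt_trichotomy S 0 with h | h | h
        · rw [hσ, if_neg (by linarith), if_pos h]
          linarith
        · exact absurd h hS0
        · rw [hσ, if_pos h]
          linarith
      have : ((∑ j, x j : ℕ) : ℤ) < ((∑ j, z j : ℕ) : ℤ) := by
        rw [hsx]; linarith
      exact_mod_cast this

lemma fact_le_pow_pred : ∀ m : ℕ, m.factorial ≤ m ^ (m - 1) := by
  intro m
  induction m with
  | zero => simp
  | succ t IH =>
      cases t with
      | zero => simp
      | succ t' =>
          rw [Nat.factorial_succ]
          simp only [Nat.succ_sub_one] at *
          calc (t'+2) * (t'+1).factorial ≤ (t'+2) * (t'+1)^t' :=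
                Nat.mul_le_mul_left _ IH
            _ ≤ (t'+2) * (t'+2)^t' := by
                apply Nat.mul_le_mul_left
                exact Nat.pow_le_pow_left (by omega) _
            _ = (t'+2)^(t'+1) := by rw [← pow_succ']

lemma natkey (m n : ℕ) (hm2 : 2 ≤ m) (hn : 1 ≤ n) :
    m.factorial * m.factorial * (n + m + 2) ≤ n * m ^ (2*m+1) := by
  have h1 : m.factorial ≤ m^(m-1) := fact_le_pow_pred m
  have h2 : m.factorial * m.factorial ≤ m^(m-1) * m^(m-1) := Nat.mul_le_mul h1 h1
  have h4 : n + m + 2 ≤ n * m^3 := by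
    obtain ⟨k, rfl⟩ : ∃ k, m = k + 2 := ⟨m - 2, by omega⟩
    have h5 : (k+2)^3 = k^3+6*k^2+12*k+8 := by ring
    rw [h5]
    have h6 : n * (k^3+6*k^2+12*k+8) = n*k^3 + 6*(n*k^2) + 12*(n*k) + 8*n := by ring
    rw [h6]
    have h7 : k ≤ n * k := Nat.le_mul_of_pos_left _ hn
    nlinarith
  calc m.factorial * m.factorial * (n + m + 2)
      ≤ (m^(m-1) * m^(m-1)) * (n * m^3) := by
        exact Nat.mul_le_mul h2 h4
    _ = n * m^((m-1)+(m-1)+3) := by rw [pow_add, pow_add]; ring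
    _ = n * m^(2*m+1) := by
        congr 1
        congr 1
        omega

theorem stmt_12 (m n a : ℕ) (ha : 0 < a)
    (c : Fin m → Fin n → ℤ) (b : Fin m → ℤ)
    (hc : ∀ i j, |c i j| ≤ (a : ℤ)) (hb : ∀ i, |b i| ≤ (a : ℤ))
    (hsol : ∃ x : Fin n → ℕ, ∀ i, b i ≤ ∑ j, c i j * (x j : ℤ)) :
    ∃ y : Fin n → ℕ, (∀ i, b i ≤ ∑ j, c i j * (y j : ℤ)) ∧
      ∀ j, y j ≤ n * (m * a) ^ (2 * m + 1) := by
  classical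
  obtain ⟨x₀, hx₀⟩ := hsol
  have haz : (1:ℤ) ≤ (a:ℤ) := by exact_mod_cast ha
  rcases Nat.eq_zero_or_pos n with rfl | hn
  · exact ⟨x₀, hx₀, fun j => j.elim0⟩
  rcases Nat.eq_zero_or_pos m with rfl | hm
  · exact ⟨fun _ => 0, fun i => i.elim0, fun j => by simp⟩
  rcases Nat.lt_or_ge m 2 with hm1 | hm2
  · -- m = 1
    obtain rfl : m = 1 := by omega
    by_cases hb0 : b 0 ≤ 0
    · refine ⟨fun _ => 0, ?_, fun j => Nat.zero_le _⟩
      intro i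
      have : i = 0 := Fin.fin_one_eq_zero i
      subst this
      simpa using hb0
    · push_neg at hb0
      have hex : ∃ j, 0 < c 0 j := by
        by_contra hno
        push_neg at hno
        have : ∑ j, c 0 j * (x₀ j : ℤ) ≤ 0 := by
          apply Finset.sum_nonpos
          intro j _
          exact mul_nonpos_of_nonpos_of_nonneg (hno j) (by positivity)
        linarith [hx₀ 0]
      obtain ⟨j, hj⟩ := hex
      refine ⟨fun j' => if j' = j then a else 0, ?_, ?_⟩
      · intro i
        have : i = 0 := Fin.fin_one_eq_zero i
        subst this
        have hsum : ∑ j', c 0 j' * ((if j' = j then a else 0 : ℕ) : ℤ)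
            = c 0 j * (a : ℤ) := by
          rw [Finset.sum_eq_single j]
          · simp
          · intro l _ hl
            simp [hl]
          · intro h; exact absurd (Finset.mem_univ _) h
        rw [hsum]
        have h1 : (1:ℤ) ≤ c 0 j := hj
        have h2 : b 0 ≤ (a:ℤ) := le_trans (le_abs_self _) (hb 0)
        nlinarith
      · intro j'
        have hbound : a ≤ n * (1*a)^(2*1+1) := by
          have h1 : (1*a)^(2*1+1) = a*a*a := by ring
          rw [h1]
          calc a ≤ a*a*a := by nlinarith
            _ ≤ n*(a*a*a) := Nat.le_mul_of_pos_left _ hn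
        by_cases h : j' = j
        · simpa [h] using hbound
        · simp [h]
  · -- main case : m ≥ 2
    set meas : (Fin n → ℕ) → (ℕ ×ₗ Lex (Fin n → ℕ)) :=
      fun x => toLex ((∑ j, x j), toLex x) with hmeas
    have hwf : WellFounded (fun x y : (Fin n → ℕ) => meas x < meas y) :=
      InvImage.wf meas wellFounded_lt
    obtain ⟨z, hz, hzmin⟩ := hwf.has_min
      {x : Fin n → ℕ | ∀ i, b i ≤ ∑ j, c i j * (x j : ℤ)} ⟨x₀, hx₀⟩
    set γ : ℤ := (m.factorial : ℤ) * (a:ℤ)^m with hγ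
    set L : ℤ := ((m:ℤ)+1) * γ with hL
    have hγ1 : (1:ℤ) ≤ γ := by
      rw [hγ]
      have h1 : (1:ℤ) ≤ (m.factorial : ℤ) := by exact_mod_cast m.factorial_pos
      have h2 : (1:ℤ) ≤ (a:ℤ)^m := one_le_pow₀ haz
      nlinarith
    have hL1 : (1:ℤ) ≤ L := by
      rw [hL]
      nlinarith [hγ1]
    have hslack0 : ∀ i, (0:ℤ) ≤ (∑ j, c i j * (z j : ℤ)) - b i := fun i => by
      have := hz i
      linarith
    set W : Finset (Fin m) :=
      Finset.univ.filter (fun i => (∑ j, c i j * (z j : ℤ)) - b i < (a:ℤ) * L) with hW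
    set T : Finset (Fin n) :=
      Finset.univ.filter (fun j => γ < (z j : ℤ)) with hT
    have hWm : W.card ≤ m := le_trans (Finset.card_le_univ W) (by simp)
    -- the reduction step: no small kernel vector of the W-rows supported on T exists
    have reduce : ∀ d : Fin n → ℤ, d ≠ 0 → (∀ j, d j ≠ 0 → γ < (z j : ℤ)) →
        (∀ j, |d j| ≤ γ) → (∑ j, |d j|) ≤ L →
        (∀ i ∈ W, ∑ j, c i j * d j = 0) → False := by
      intro d hd0 hdsupp hdγ hdL hdker
      have hdz : ∀ j, |d j| ≤ (z j : ℤ) := by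
        intro j
        by_cases h : d j = 0
        · rw [h]; simp
        · exact le_trans (hdγ j) (le_of_lt (hdsupp j h))
      have hslack : ∀ i, |∑ j, c i j * d j| ≤ (∑ j, c i j * (z j : ℤ)) - b i := by
        intro i
        by_cases hiW : i ∈ W
        · rw [hdker i hiW]
          simpa using hslack0 i
        · have hbig : (a:ℤ) * L ≤ (∑ j, c i j * (z j : ℤ)) - b i := by
            rw [hW] at hiW
            simp only [Finset.mem_filter, Finset.mem_univ, true_and] at hiW
            linarith [not_lt.mp hiW]
          refine le_trans ?_ hbig
          calc |∑ j, c i j * d j| ≤ ∑ j, |c i j * d j| := Finset.abs_sum_le_sum_abs _ _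
            _ ≤ ∑ j, (a:ℤ) * |d j| := by
                refine Finset.sum_le_sum fun j _ => ?_
                rw [abs_mul]
                exact mul_le_mul_of_nonneg_right (hc i j) (abs_nonneg _)
            _ = (a:ℤ) * ∑ j, |d j| := by rw [Finset.mul_sum]
            _ ≤ (a:ℤ) * L := by
                apply mul_le_mul_of_nonneg_left hdL
                positivity
      obtain ⟨x, hxsol, hxlt⟩ := exchange c b z d hd0 hdz hslack
      exact hzmin x hxsol hxlt
    -- generic extension-contradiction
    have extend : ∀ (k : ℕ), k ≤ m + 1 → ∀ (T'' : Finset (Fin n)), T'' ⊆ T →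
        ∀ (hcard : T''.card = k) (d' : Fin k → ℤ), d' ≠ 0 →
        (∀ i : {i // i ∈ W}, ∑ l, c i.1 (T''.orderEmbOfFin hcard l) * d' l = 0) →
        (∀ l, |d' l| ≤ γ) → False := by
      intro k hk T'' hsub hcard d' hd'0 hker hbd
      set e := T''.orderEmbOfFin hcard with he
      have einj : Function.Injective e := (T''.orderEmbOfFin hcard).injective
      set D : Fin n → ℤ := fun j => ∑ l, if j = e l then d' l else 0 with hD
      have hDe : ∀ l, D (e l) = d' l := by
        intro l
        show (∑ l', if e l = e l' then d' l' else 0) = d' l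
        rw [Finset.sum_eq_single l]
        · rw [if_pos rfl]
        · intro l' _ hl'
          rw [if_neg (fun h => hl' (einj h).symm)]
        · intro h; exact absurd (Finset.mem_univ _) h
      have hDoff : ∀ j, (∀ l, j ≠ e l) → D j = 0 := by
        intro j hj
        show (∑ l, if j = e l then d' l else 0) = 0
        apply Finset.sum_eq_zero
        intro l _
        rw [if_neg (hj l)]
      have hDcases : ∀ j, (∃ l, j = e l) ∨ D j = 0 := by
        intro j
        by_cases h : ∃ l, j = e l
        · exact Or.inl h
        · push_neg at h
          exact Or.inr (hDoff j h)
      apply reduce D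
      · intro h
        obtain ⟨l₀, hl₀⟩ := Function.ne_iff.mp hd'0
        have : D (e l₀) = 0 := congrFun h (e l₀)
        rw [hDe] at this
        exact hl₀ this
      · intro j hj
        rcases hDcases j with ⟨l, rfl⟩ | h0
        · have hmem : e l ∈ T := hsub (T''.orderEmbOfFin_mem hcard l)
          rw [hT] at hmem
          simpa using hmem
        · exact absurd h0 hj
      · intro j
        rcases hDcases j with ⟨l, rfl⟩ | h0
        · rw [hDe]; exact hbd l
        · rw [h0]; simpa using le_trans zero_le_one hγ1
      · have hsplit : ∑ j, |D j| = ∑ j ∈ Finset.image e Finset.univ, |D j| := by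
          symm
          apply Finset.sum_subset (Finset.subset_univ _)
          intro j _ hj
          have : ∀ l, j ≠ e l := by
            intro l h
            exact hj (Finset.mem_image.mpr ⟨l, Finset.mem_univ _, h.symm⟩)
          rw [hDoff j this, abs_zero]
        rw [hsplit, Finset.sum_image (fun p _ q _ h => einj h)]
        calc ∑ l, |D (e l)| = ∑ l, |d' l| := by
              exact Finset.sum_congr rfl fun l _ => by rw [hDe]
          _ ≤ ∑ _l : Fin k, γ := Finset.sum_le_sum fun l _ => hbd l
          _ = (k:ℤ) * γ := by rw [Finset.sum_const, Finset.card_univ, Fintype.card_fin,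
                nsmul_eq_mul]
          _ ≤ L := by
              rw [hL]
              apply mul_le_mul_of_nonneg_right _ (by linarith)
              exact_mod_cast (by exact_mod_cast hk : (k:ℤ) ≤ (m:ℤ)+1)
      · intro i hiW
        have hswap : ∑ j, c i j * D j = ∑ l, c i (e l) * d' l := by
          calc ∑ j, c i j * D j = ∑ j, ∑ l, (if j = e l then c i j * d' l else 0) := by
                refine Finset.sum_congr rfl fun j _ => ?_
                show c i j * (∑ l, if j = e l then d' l else 0) = _
                rw [Finset.mul_sum]
                refine Finset.sum_congr rfl fun l _ => ?_
                rw [mul_ite, mul_zero]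
            _ = ∑ l, ∑ j, (if j = e l then c i j * d' l else 0) := Finset.sum_comm
            _ = ∑ l, c i (e l) * d' l := by
                refine Finset.sum_congr rfl fun l _ => ?_
                rw [Finset.sum_eq_single (e l)]
                · rw [if_pos rfl]
                · intro j _ hj
                  rw [if_neg hj]
                · intro h; exact absurd (Finset.mem_univ _) h
        rw [hswap]
        exact hker ⟨i, hiW⟩
    -- Step 1 : T.card ≤ W.card
    have hTW : T.card ≤ W.card := by
      by_contra hcon
      push_neg at hcon
      obtain ⟨T', hT'sub, hT'card⟩ := Finset.exists_subset_card_eq (by omega : W.card + 1 ≤ T.card)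
      set e := T'.orderEmbOfFin hT'card with he
      set M : Matrix {i // i ∈ W} (Fin (W.card + 1)) ℤ := fun i k => c i.1 (e k) with hM
      rcases dichotomy haz (W.card + 1) M (fun i k => hc _ _) with
        ⟨d', hd'0, hker, hbd⟩ | ⟨r, _⟩
      · -- build the extended vector and contradict
        refine extend (W.card + 1) (by omega) T' hT'sub hT'card d' hd'0 hker ?_
        intro l
        refine le_trans (hbd l) ?_
        rw [hγ]
        simp only [Nat.add_sub_cancel]
        have h1 : ((W.card.factorial : ℕ) : ℤ) ≤ ((m.factorial : ℕ) : ℤ) := by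
          exact_mod_cast Nat.factorial_le hWm
        have h2 : (a:ℤ)^(W.card) ≤ (a:ℤ)^m := pow_le_pow_right₀ haz hWm
        have h3 : (0:ℤ) ≤ (a:ℤ)^(W.card) := by positivity
        calc ((W.card.factorial : ℕ) : ℤ) * (a:ℤ)^(W.card)
            ≤ ((m.factorial : ℕ) : ℤ) * (a:ℤ)^(W.card) :=
              mul_le_mul_of_nonneg_right h1 h3
          _ ≤ ((m.factorial : ℕ) : ℤ) * (a:ℤ)^m := by
              apply mul_le_mul_of_nonneg_left h2
              positivity
      · have h2 : Fintype.card (Fin (W.card + 1)) ≤ Fintype.card {i // i ∈ W} :=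
          Fintype.card_le_of_embedding r
        rw [Fintype.card_coe, Fintype.card_fin] at h2
        omega
    -- Step 2 : Cramer bound on the large coordinates
    have hsm : T.card ≤ m := le_trans hTW hWm
    set e2 := T.orderEmbOfFin rfl with he2
    set M2 : Matrix {i // i ∈ W} (Fin T.card) ℤ := fun i k => c i.1 (e2 k) with hM2
    -- the final bound, as an integer
    set Bd : ℤ := (n:ℤ) * ((m:ℤ)*(a:ℤ))^(2*m+1) with hBd
    have hγBd : γ ≤ Bd := by
      rw [hγ, hBd, mul_pow]
      have h1 : ((m.factorial:ℕ):ℤ) ≤ (m:ℤ)^(2*m+1) := by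
        have : m.factorial ≤ m^(2*m+1) := by
          calc m.factorial ≤ m^(m-1) := fact_le_pow_pred m
            _ ≤ m^(2*m+1) := Nat.pow_le_pow_right (by omega) (by omega)
        exact_mod_cast this
      have h2 : (a:ℤ)^m ≤ (a:ℤ)^(2*m+1) := pow_le_pow_right₀ haz (by omega)
      have h3 : (1:ℤ) ≤ (n:ℤ) := by exact_mod_cast hn
      have h4 : (0:ℤ) ≤ (m:ℤ)^(2*m+1) * (a:ℤ)^(2*m+1) := by positivity
      calc ((m.factorial:ℕ):ℤ) * (a:ℤ)^m ≤ (m:ℤ)^(2*m+1) * (a:ℤ)^(2*m+1) := by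
            refine mul_le_mul h1 h2 (by positivity) ?_
            have : (0:ℕ) < m := hm
            positivity
        _ ≤ (n:ℤ) * ((m:ℤ)^(2*m+1) * (a:ℤ)^(2*m+1)) := le_mul_of_one_le_left h4 h3
    have hzT : ∀ j, j ∉ T → (z j : ℤ) ≤ γ := by
      intro j hj
      rw [hT] at hj
      simp only [Finset.mem_filter, Finset.mem_univ, true_and, not_lt] at hj
      exact hj
    rcases dichotomy haz T.card M2 (fun i k => hc _ _) with
      ⟨d', hd'0, hker, hbd⟩ | ⟨r, hdet⟩
    · exfalso
      refine extend T.card (by omega) T (Finset.Subset.refl T) rfl d' hd'0 hker ?_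
      intro l
      refine le_trans (hbd l) ?_
      rw [hγ]
      have h1 : (((T.card-1).factorial : ℕ) : ℤ) ≤ ((m.factorial : ℕ) : ℤ) := by
        exact_mod_cast Nat.factorial_le (by omega)
      have h2 : (a:ℤ)^(T.card-1) ≤ (a:ℤ)^m := pow_le_pow_right₀ haz (by omega)
      have h3 : (0:ℤ) ≤ (a:ℤ)^(T.card-1) := by positivity
      calc (((T.card-1).factorial : ℕ) : ℤ) * (a:ℤ)^(T.card-1)
          ≤ ((m.factorial : ℕ) : ℤ) * (a:ℤ)^(T.card-1) :=
            mul_le_mul_of_nonneg_right h1 h3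
        _ ≤ ((m.factorial : ℕ) : ℤ) * (a:ℤ)^m := by
            apply mul_le_mul_of_nonneg_left h2
            positivity
    · -- Cramer
      set R : Matrix (Fin T.card) (Fin T.card) ℤ := M2.submatrix r id with hR
      have hRa : ∀ k l, |R k l| ≤ (a:ℤ) := fun k l => hc _ _
      set zT : Fin T.card → ℤ := fun k => (z (e2 k) : ℤ) with hzTdef
      set V : ℤ := (a:ℤ)*(1 + L) + (n:ℤ)*((a:ℤ)*γ) with hV
      have hrW : ∀ k : Fin T.card, (r k).1 ∈ W := fun k => (r k).2
      have hv : ∀ k, |(R.mulVec zT) k| ≤ V := by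
        intro k
        have hiW : (r k).1 ∈ W := (r k).2
        set i : Fin m := (r k).1 with hi
        have hmv : (R.mulVec zT) k = ∑ l, c i (e2 l) * (z (e2 l) : ℤ) := by
          show (∑ l, R k l * zT l) = _
          rfl
        have himg : Finset.image (⇑e2) Finset.univ = T := by
          apply Finset.eq_of_subset_of_card_le
          · intro j hj
            obtain ⟨l, _, rfl⟩ := Finset.mem_image.mp hj
            exact T.orderEmbOfFin_mem rfl l
          · rw [Finset.card_image_of_injective _ (T.orderEmbOfFin rfl).injective]
            simp
        have hwhole : ∑ l, c i (e2 l) * (z (e2 l) : ℤ) = ∑ j ∈ T, c i j * (z j : ℤ) := by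
          have him2 : ∑ j ∈ Finset.image (⇑e2) Finset.univ, c i j * (z j : ℤ)
              = ∑ l, c i (e2 l) * (z (e2 l) : ℤ) :=
            Finset.sum_image (fun p _ q _ h => (T.orderEmbOfFin rfl).injective h)
          rw [himg] at him2
          exact him2.symm
        have hsplit : (∑ j ∈ T, c i j * (z j : ℤ)) + (∑ j ∈ Tᶜ, c i j * (z j : ℤ))
            = ∑ j, c i j * (z j : ℤ) := Finset.sum_add_sum_compl T _
        have hbound1 : |∑ j, c i j * (z j : ℤ)| ≤ (a:ℤ)*(1 + L) := by
          rw [abs_le]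
          constructor
          · have h1 : -(a:ℤ) ≤ b i := neg_le_of_abs_le (hb i)
            have h2 := hz i
            have h3 : (0:ℤ) ≤ (a:ℤ)*L := by positivity
            nlinarith
          · have hiW2 : (∑ j, c i j * (z j : ℤ)) - b i < (a:ℤ) * L := by
              have h := hiW
              rw [hW] at h
              simp only [Finset.mem_filter, Finset.mem_univ, true_and] at h
              exact h
            have h1 : b i ≤ (a:ℤ) := le_of_abs_le (hb i)
            nlinarith
        have hbound2 : |∑ j ∈ Tᶜ, c i j * (z j : ℤ)| ≤ (n:ℤ)*((a:ℤ)*γ) := by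
          calc |∑ j ∈ Tᶜ, c i j * (z j : ℤ)| ≤ ∑ j ∈ Tᶜ, |c i j * (z j : ℤ)| :=
                Finset.abs_sum_le_sum_abs _ _
            _ ≤ ∑ _j ∈ Tᶜ, (a:ℤ)*γ := by
                refine Finset.sum_le_sum fun j hj => ?_
                rw [abs_mul]
                have hzj : |(z j : ℤ)| ≤ γ := by
                  rw [abs_of_nonneg (by positivity)]
                  exact hzT j (by simpa using hj)
                apply mul_le_mul (hc i j) hzj (abs_nonneg _) (by positivity)
            _ = (Tᶜ.card : ℤ) * ((a:ℤ)*γ) := by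
                rw [Finset.sum_const, nsmul_eq_mul]
            _ ≤ (n:ℤ)*((a:ℤ)*γ) := by
                apply mul_le_mul_of_nonneg_right _ (by positivity)
                have : Tᶜ.card ≤ n := le_trans (Finset.card_le_univ _) (by simp)
                exact_mod_cast this
        rw [hmv, hwhole, hV]
        calc |∑ j ∈ T, c i j * (z j : ℤ)|
            = |(∑ j, c i j * (z j : ℤ)) - ∑ j ∈ Tᶜ, c i j * (z j : ℤ)| := by
              rw [← hsplit]; congr 1; ring
          _ ≤ |∑ j, c i j * (z j : ℤ)| + |∑ j ∈ Tᶜ, c i j * (z j : ℤ)| := abs_sub _ _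
          _ ≤ (a:ℤ)*(1 + L) + (n:ℤ)*((a:ℤ)*γ) := add_le_add hbound1 hbound2
      have hVpos : (0:ℤ) ≤ V := by
        rw [hV]
        have h1 : (0:ℤ) ≤ (a:ℤ)*(1+L) := mul_nonneg (by positivity) (by linarith)
        have h2 : (0:ℤ) ≤ (n:ℤ)*((a:ℤ)*γ) := mul_nonneg (by positivity)
          (mul_nonneg (by positivity) (by linarith))
        linarith
      have ha0 : (0:ℤ) ≤ (a:ℤ) := by positivity
      have hadj : ∀ k l, |R.adjugate k l| ≤ (((T.card-1).factorial:ℕ):ℤ) * (a:ℤ)^(T.card-1) :=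
        fun k l => adjAbs R hRa ha0 k l
      have hcram : ∀ k, R.det * zT k = ∑ l, R.adjugate k l * (R.mulVec zT) l := by
        intro k
        have hid : R.adjugate.mulVec (R.mulVec zT) = R.det • zT := by
          rw [Matrix.mulVec_mulVec, Matrix.adjugate_mul, Matrix.smul_mulVec,
            Matrix.one_mulVec]
        calc R.det * zT k = (R.det • zT) k := by simp
          _ = R.adjugate.mulVec (R.mulVec zT) k := (congrFun hid k).symm
          _ = ∑ l, R.adjugate k l * (R.mulVec zT) l := rfl
      have hfp0 : (0:ℤ) ≤ (((T.card-1).factorial:ℕ):ℤ) * (a:ℤ)^(T.card-1) := by positivity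
      have hzbound : ∀ k, zT k ≤
          ((T.card:ℤ) * ((((T.card-1).factorial:ℕ):ℤ) * (a:ℤ)^(T.card-1))) * V := by
        intro k
        have h0 : (0:ℤ) ≤ zT k := Int.natCast_nonneg _
        have h1 : (1:ℤ) ≤ |R.det| := Int.one_le_abs hdet
        calc zT k = |zT k| := (abs_of_nonneg h0).symm
          _ ≤ |R.det| * |zT k| := le_mul_of_one_le_left (abs_nonneg _) h1
          _ = |R.det * zT k| := (abs_mul _ _).symm
          _ = |∑ l, R.adjugate k l * (R.mulVec zT) l| := by rw [hcram k]
          _ ≤ ∑ l, |R.adjugate k l * (R.mulVec zT) l| := Finset.abs_sum_le_sum_abs _ _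
          _ ≤ ∑ _l : Fin T.card, ((((T.card-1).factorial:ℕ):ℤ) * (a:ℤ)^(T.card-1)) * V := by
              refine Finset.sum_le_sum fun l _ => ?_
              rw [abs_mul]
              exact mul_le_mul (hadj k l) (hv l) (abs_nonneg _) hfp0
          _ = ((T.card:ℤ) * ((((T.card-1).factorial:ℕ):ℤ) * (a:ℤ)^(T.card-1))) * V := by
              rw [Finset.sum_const, Finset.card_univ, Fintype.card_fin, nsmul_eq_mul]
              ring
      have harith : ((T.card:ℤ) * ((((T.card-1).factorial:ℕ):ℤ) * (a:ℤ)^(T.card-1))) * V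
          ≤ Bd := by
        have c1 : (T.card:ℤ) * ((((T.card-1).factorial:ℕ):ℤ) * (a:ℤ)^(T.card-1))
            ≤ ((m.factorial:ℕ):ℤ) * (a:ℤ)^(m-1) := by
          have hn1 : T.card * (T.card-1).factorial ≤ m.factorial := by
            rcases Nat.eq_zero_or_pos T.card with h0 | hpos
            · rw [h0]
              simpa using Nat.one_le_iff_ne_zero.mpr (Nat.factorial_ne_zero m)
            · have hTc : T.card * (T.card-1).factorial = T.card.factorial := by
                obtain ⟨t, ht⟩ := Nat.exists_eq_succ_of_ne_zero (Nat.pos_iff_ne_zero.mp hpos)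
                rw [ht]
                simp [Nat.factorial_succ]
              rw [hTc]
              exact Nat.factorial_le hsm
          have hp : (a:ℤ)^(T.card-1) ≤ (a:ℤ)^(m-1) := pow_le_pow_right₀ haz (by omega)
          have hp0 : (0:ℤ) ≤ (a:ℤ)^(T.card-1) := by positivity
          calc (T.card:ℤ) * ((((T.card-1).factorial:ℕ):ℤ) * (a:ℤ)^(T.card-1))
              = ((T.card * (T.card-1).factorial : ℕ):ℤ) * (a:ℤ)^(T.card-1) := by
                push_cast
                ring
            _ ≤ ((m.factorial:ℕ):ℤ) * (a:ℤ)^(T.card-1) := by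
                apply mul_le_mul_of_nonneg_right _ hp0
                exact_mod_cast hn1
            _ ≤ ((m.factorial:ℕ):ℤ) * (a:ℤ)^(m-1) := by
                apply mul_le_mul_of_nonneg_left hp
                positivity
        have c2 : V ≤ (a:ℤ)*γ*((n:ℤ)+(m:ℤ)+2) := by
          rw [hV, hL]
          have hγa : (a:ℤ) ≤ (a:ℤ)*γ := le_mul_of_one_le_right ha0 hγ1
          nlinarith [hγa]
        have c3 : ((m.factorial:ℕ):ℤ) * (a:ℤ)^(m-1) * ((a:ℤ)*γ*((n:ℤ)+(m:ℤ)+2)) ≤ Bd := by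
          rw [hγ, hBd, mul_pow]
          have hA : (a:ℤ)^(m-1) * ((a:ℤ) * (a:ℤ)^m) = (a:ℤ)^(2*m) := by
            rw [← pow_succ', ← pow_add]
            congr 1
            omega
          have key : ((m.factorial * m.factorial * (n + m + 2) : ℕ):ℤ)
              ≤ ((n * m^(2*m+1) : ℕ):ℤ) := by
            exact_mod_cast natkey m n hm2 hn
          have key2 : ((m.factorial:ℕ):ℤ) * ((m.factorial:ℕ):ℤ) * ((n:ℤ)+(m:ℤ)+2)
              ≤ (n:ℤ) * (m:ℤ)^(2*m+1) := by
            push_cast at key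
            linarith
          calc ((m.factorial:ℕ):ℤ) * (a:ℤ)^(m-1) *
                ((a:ℤ)*(((m.factorial:ℕ):ℤ) * (a:ℤ)^m)*((n:ℤ)+(m:ℤ)+2))
              = (((m.factorial:ℕ):ℤ) * ((m.factorial:ℕ):ℤ) * ((n:ℤ)+(m:ℤ)+2))
                  * ((a:ℤ)^(m-1) * ((a:ℤ) * (a:ℤ)^m)) := by ring
            _ = (((m.factorial:ℕ):ℤ) * ((m.factorial:ℕ):ℤ) * ((n:ℤ)+(m:ℤ)+2))
                  * (a:ℤ)^(2*m) := by rw [hA]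
            _ ≤ ((n:ℤ) * (m:ℤ)^(2*m+1)) * (a:ℤ)^(2*m) := by
                apply mul_le_mul_of_nonneg_right key2
                positivity
            _ ≤ ((n:ℤ) * (m:ℤ)^(2*m+1)) * (a:ℤ)^(2*m+1) := by
                apply mul_le_mul_of_nonneg_left (pow_le_pow_right₀ haz (by omega))
                have : (0:ℕ) < m := hm
                positivity
            _ = (n:ℤ) * ((m:ℤ)^(2*m+1) * (a:ℤ)^(2*m+1)) := by ring
        calc ((T.card:ℤ) * ((((T.card-1).factorial:ℕ):ℤ) * (a:ℤ)^(T.card-1))) * V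
            ≤ (((m.factorial:ℕ):ℤ) * (a:ℤ)^(m-1)) * ((a:ℤ)*γ*((n:ℤ)+(m:ℤ)+2)) := by
              apply mul_le_mul c1 c2 hVpos
              positivity
          _ ≤ Bd := c3
      refine ⟨z, hz, ?_⟩
      intro j
      have hzj : (z j : ℤ) ≤ Bd := by
        by_cases hjT : j ∈ T
        · have hjr : j ∈ Set.range ⇑e2 := by
            rw [he2, Finset.range_orderEmbOfFin]
            exact hjT
          obtain ⟨l, hl⟩ := hjr
          calc (z j:ℤ) = zT l := by rw [← hl]
            _ ≤ ((T.card:ℤ) * ((((T.card-1).factorial:ℕ):ℤ) * (a:ℤ)^(T.card-1))) * V :=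
              hzbound l
            _ ≤ Bd := harith
        · exact le_trans (hzT j hjT) hγBd
      have hfin : (z j : ℤ) ≤ ((n * (m*a)^(2*m+1) : ℕ) : ℤ) := by
        rw [hBd] at hzj
        refine le_trans hzj (le_of_eq ?_)
        push_cast
        ring
      exact_mod_cast hfin
end
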